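/- Let m ≥ 1, k with 1 ≤ k ≤ m, and for each subset S of {1,…,m} of cardinality k define for an index i ∈ {1,…,n}^m the mixed norm N_S(a) = (∑_{i_S} (∑_{i_{Ŝ}} |a_i|²)^{(1/2)·(2k/(k+1))})^{(k+1)/(2k)}, where i_S denotes the coordinates of i in S and Ŝ is the complement of S. Then for every family (a_i) of complex numbers indexed by {1,…,n}^m, (∑_{i} |a_i|^{2m/(m+1)})^{(m+1)/(2m)} ≤ ∏_{S ⊆ {1,…,m}, |S|=k} N_S(a)^{1/binom(m,k)}. -/

import Mathlib

open Finset NNReal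
variable {n : ℕ}



noncomputable def mnorm : (M : ℕ) → (Fin M → ℝ) → ((Fin M → Fin n) → ℝ≥0) → ℝ≥0
  | 0, _, a => a (fun i => i.elim0)
  | M + 1, p, a =>
      (∑ x : Fin n,
        (mnorm M (fun j => p j.succ) (fun i' => a (Fin.cons x i'))) ^ (p 0)) ^ (1 / p 0)

lemma sum_pi_succ {M : ℕ} (f : (Fin (M + 1) → Fin n) → ℝ≥0) :
    ∑ x : Fin n, ∑ i' : Fin M → Fin n, f (Fin.cons x i') = ∑ i : Fin (M + 1) → Fin n, f i := by
  have h := Fintype.sum_equiv (Fin.consEquiv fun _ => Fin n) (fun p => f (Fin.cons p.1 p.2)) f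
    (fun p => rfl)
  rw [← h, Fintype.sum_prod_type]

lemma mnorm_const {M : ℕ} {c : ℝ} (hc : 0 < c) (a : (Fin M → Fin n) → ℝ≥0) :
    mnorm M (fun _ => c) a = (∑ i, a i ^ c) ^ (1 / c) := by
  induction M with
  | zero =>
      rw [mnorm]
      have h1 : (∑ i : Fin 0 → Fin n, a i ^ c) = a (fun i => i.elim0) ^ c := by
        rw [Fintype.sum_unique (fun i : Fin 0 → Fin n => a i ^ c)]
        exact congrArg (fun z => a z ^ c) (Subsingleton.elim _ _)
      rw [h1, NNReal.rpow_inv_rpow_self hc.ne']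
  | succ M ih =>
      rw [mnorm]
      simp only [ih]
      congr 1
      rw [← sum_pi_succ (fun i => a i ^ c)]
      refine Finset.sum_congr rfl fun x _ => ?_
      rw [one_div, NNReal.rpow_inv_rpow hc.ne']

lemma gen_holder {τ ι : Type*} [Fintype ι] (T : Finset τ) (θ : τ → ℝ≥0)
    (hθ1 : ∑ t ∈ T, θ t = 1) (hθ : ∀ t ∈ T, 0 < θ t) (C : τ → ι → ℝ≥0) :
    ∑ i : ι, ∏ t ∈ T, C t i ^ (θ t : ℝ) ≤ ∏ t ∈ T, (∑ i : ι, C t i) ^ (θ t : ℝ) := by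
  by_cases hz : ∃ t ∈ T, ∑ i : ι, C t i = 0
  · obtain ⟨t₀, ht₀, h0⟩ := hz
    have hC0 : ∀ i, C t₀ i = 0 := by
      intro i
      exact (Finset.sum_eq_zero_iff.mp h0) i (Finset.mem_univ i)
    have : ∀ i : ι, ∏ t ∈ T, C t i ^ (θ t : ℝ) = 0 := by
      intro i
      refine Finset.prod_eq_zero ht₀ ?_
      rw [hC0 i, NNReal.zero_rpow]
      exact_mod_cast (hθ t₀ ht₀).ne'
    rw [Finset.sum_eq_zero fun i _ => this i]
    exact zero_le
  · push_neg at hz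
    have key : ∀ i : ι, ∏ t ∈ T, C t i ^ (θ t : ℝ) =
        (∏ t ∈ T, (∑ j : ι, C t j) ^ (θ t : ℝ)) *
          ∏ t ∈ T, (C t i / ∑ j : ι, C t j) ^ (θ t : ℝ) := by
      intro i
      rw [← Finset.prod_mul_distrib]
      refine Finset.prod_congr rfl fun t ht => ?_
      rw [← NNReal.mul_rpow, mul_div_cancel₀ _ (hz t ht)]
    calc ∑ i : ι, ∏ t ∈ T, C t i ^ (θ t : ℝ)
        = (∏ t ∈ T, (∑ j : ι, C t j) ^ (θ t : ℝ)) *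
            ∑ i : ι, ∏ t ∈ T, (C t i / ∑ j : ι, C t j) ^ (θ t : ℝ) := by
          rw [Finset.mul_sum]; exact Finset.sum_congr rfl fun i _ => key i
      _ ≤ (∏ t ∈ T, (∑ j : ι, C t j) ^ (θ t : ℝ)) *
            ∑ i : ι, ∑ t ∈ T, θ t * (C t i / ∑ j : ι, C t j) := by
          refine mul_le_mul_right (Finset.sum_le_sum fun i _ => ?_) _
          exact NNReal.geom_mean_le_arith_mean_weighted T θ _ hθ1
      _ = ∏ t ∈ T, (∑ j : ι, C t j) ^ (θ t : ℝ) := by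
          rw [Finset.sum_comm]
          have : ∀ t ∈ T, ∑ i : ι, θ t * (C t i / ∑ j : ι, C t j) = θ t := by
            intro t ht
            rw [← Finset.mul_sum, ← Finset.sum_div, div_self (hz t ht), mul_one]
          rw [Finset.sum_congr rfl this, hθ1, mul_one]

lemma minkowski_sum {ι κ : Type*} [Fintype ι] (Y : Finset κ) (G : ι → κ → ℝ≥0) {r : ℝ}
    (hr : 1 ≤ r) :
    (∑ x : ι, (∑ y ∈ Y, G x y) ^ r) ^ (1 / r) ≤ ∑ y ∈ Y, (∑ x : ι, G x y ^ r) ^ (1 / r) := by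
  have hr0 : r ≠ 0 := by positivity
  induction Y using Finset.cons_induction with
  | empty => simp [NNReal.zero_rpow, hr0, one_div_ne_zero hr0]
  | cons y Y hy ih =>
      simp only [Finset.sum_cons]
      calc (∑ x : ι, (G x y + ∑ y' ∈ Y, G x y') ^ r) ^ (1 / r)
          ≤ (∑ x : ι, G x y ^ r) ^ (1 / r) + (∑ x : ι, (∑ y' ∈ Y, G x y') ^ r) ^ (1 / r) :=
            NNReal.Lp_add_le Finset.univ _ _ hr
        _ ≤ _ := add_le_add_right ih _

lemma rpow_finset_sum {τ : Type*} {x : ℝ≥0} (hx : x ≠ 0) (T : Finset τ) (f : τ → ℝ) :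
    x ^ (∑ t ∈ T, f t) = ∏ t ∈ T, x ^ f t := by
  induction T using Finset.cons_induction with
  | empty => simp
  | cons t T ht ih => rw [Finset.sum_cons, Finset.prod_cons, NNReal.rpow_add hx, ih]

lemma mholder {τ : Type*} (T : Finset τ) (θ : τ → ℝ≥0) (hθ1 : ∑ t ∈ T, θ t = 1)
    (hθ : ∀ t ∈ T, 0 < θ t) :
    ∀ (M : ℕ) (p : τ → Fin M → ℝ) (q : Fin M → ℝ),
      (∀ t ∈ T, ∀ j, 0 < p t j) → (∀ j, 0 < q j) →
      (∀ j, 1 / q j = ∑ t ∈ T, (θ t : ℝ) / p t j) →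
      ∀ a : (Fin M → Fin n) → ℝ≥0, mnorm M q a ≤ ∏ t ∈ T, mnorm M (p t) a ^ (θ t : ℝ)
  | 0, p, q, hp, hq, hpq, a => by
      rw [mnorm]
      by_cases ha : a (fun i => i.elim0) = 0
      · rw [ha]; exact zero_le
      · have : ∏ t ∈ T, mnorm 0 (p t) a ^ (θ t : ℝ)
            = a (fun i => i.elim0) ^ (∑ t ∈ T, (θ t : ℝ)) := by
          rw [rpow_finset_sum ha]
          exact Finset.prod_congr rfl fun t _ => by rw [mnorm]
        rw [this]
        have hs : (∑ t ∈ T, (θ t : ℝ)) = 1 := by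
          rw [← NNReal.coe_sum, hθ1, NNReal.coe_one]
        rw [hs, NNReal.rpow_one]
  | M + 1, p, q, hp, hq, hpq, a => by
      have hq0 : 0 < q 0 := hq 0
      set B : τ → Fin n → ℝ≥0 :=
        fun t x => mnorm M (fun j => p t j.succ) (fun i' => a (Fin.cons x i')) with hB
      -- weights for gen_holder
      set θ' : τ → ℝ≥0 := fun t => θ t * (q 0).toNNReal * ((p t 0).toNNReal)⁻¹ with hθ'
      have hθ'c : ∀ t ∈ T, (θ' t : ℝ) = (θ t : ℝ) * q 0 / p t 0 := by
        intro t ht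
        rw [hθ']
        push_cast
        rw [Real.coe_toNNReal _ hq0.le, Real.coe_toNNReal _ (hp t ht 0).le]
        ring
      have hθ'1 : ∑ t ∈ T, θ' t = 1 := by
        have : (↑(∑ t ∈ T, θ' t) : ℝ) = 1 := by
          rw [NNReal.coe_sum]
          rw [Finset.sum_congr rfl hθ'c]
          have := hpq 0
          calc ∑ t ∈ T, (θ t : ℝ) * q 0 / p t 0 = q 0 * ∑ t ∈ T, (θ t : ℝ) / p t 0 := by
                rw [Finset.mul_sum]; exact Finset.sum_congr rfl fun t _ => by ring
            _ = q 0 * (1 / q 0) := by rw [← this]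
            _ = 1 := by field_simp
        exact_mod_cast this
      have hθ'pos : ∀ t ∈ T, 0 < θ' t := by
        intro t ht
        have : (0:ℝ) < (θ' t : ℝ) := by
          rw [hθ'c t ht]
          have h1 : (0:ℝ) < (θ t : ℝ) := hθ t ht
          have h2 := hp t ht 0
          positivity
        exact_mod_cast this
      rw [mnorm]
      -- step 1: apply IH inside
      have step1 : (∑ x : Fin n, (mnorm M (fun j => q j.succ) fun i' => a (Fin.cons x i')) ^ q 0)
            ^ (1 / q 0)
          ≤ (∑ x : Fin n, (∏ t ∈ T, B t x ^ (θ t : ℝ)) ^ q 0) ^ (1 / q 0) := by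
        refine NNReal.rpow_le_rpow (Finset.sum_le_sum fun x _ => ?_) (by positivity)
        refine NNReal.rpow_le_rpow ?_ hq0.le
        exact mholder T θ hθ1 hθ M (fun t j => p t j.succ) (fun j => q j.succ)
          (fun t ht j => hp t ht j.succ) (fun j => hq j.succ) (fun j => hpq j.succ) _
      refine le_trans step1 ?_
      -- step 2: generalized Hölder in the outer sum
      have hC : ∀ x : Fin n, (∏ t ∈ T, B t x ^ (θ t : ℝ)) ^ q 0
          = ∏ t ∈ T, (B t x ^ p t 0) ^ (θ' t : ℝ) := by
        intro x
        rw [← NNReal.finset_prod_rpow]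
        refine Finset.prod_congr rfl fun t ht => ?_
        rw [← NNReal.rpow_mul, ← NNReal.rpow_mul]
        congr 1
        rw [hθ'c t ht]
        have hpt := (hp t ht 0).ne'
        field_simp
      have step2 : (∑ x : Fin n, (∏ t ∈ T, B t x ^ (θ t : ℝ)) ^ q 0) ^ (1 / q 0)
          ≤ (∏ t ∈ T, (∑ x : Fin n, B t x ^ p t 0) ^ (θ' t : ℝ)) ^ (1 / q 0) := by
        refine NNReal.rpow_le_rpow ?_ (by positivity)
        rw [Finset.sum_congr rfl fun x _ => hC x]
        exact gen_holder T θ' hθ'1 hθ'pos (fun t x => B t x ^ p t 0)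
      refine le_trans step2 (le_of_eq ?_)
      rw [← NNReal.finset_prod_rpow]
      refine Finset.prod_congr rfl fun t ht => ?_
      rw [mnorm]
      simp only [hB]
      rw [← NNReal.rpow_mul, ← NNReal.rpow_mul, hθ'c t ht]
      congr 1
      have hpt := (hp t ht 0).ne'
      have hq0' := hq0.ne'
      field_simp

/-- Combine an assignment of coordinates on `S` and on its complement into a
multi-index in `Fin m → Fin n`. -/
def combineIdx {m n : ℕ} (S : Finset (Fin m))
    (g : {x // x ∈ S} → Fin n) (h : {x // x ∈ Sᶜ} → Fin n) : Fin m → Fin n :=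
  fun x => if hx : x ∈ S then g ⟨x, hx⟩ else h ⟨x, Finset.mem_compl.mpr hx⟩

def derivS {M : ℕ} (S : Finset (Fin (M + 1))) : Finset (Fin M) :=
  Finset.univ.filter (fun j => j.succ ∈ S)

@[simp] lemma mem_derivS {M : ℕ} {S : Finset (Fin (M + 1))} {j : Fin M} :
    j ∈ derivS S ↔ j.succ ∈ S := by simp [derivS]

lemma derivS_compl {M : ℕ} (S : Finset (Fin (M + 1))) {j : Fin M} :
    j.succ ∈ Sᶜ ↔ j ∈ (derivS S)ᶜ := by simp

def succEquivMem {M : ℕ} (T : Finset (Fin (M + 1))) (U : Finset (Fin M))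
    (hTU : ∀ j : Fin M, j.succ ∈ T ↔ j ∈ U) (h0 : (0 : Fin (M + 1)) ∉ T) :
    {i // i ∈ T} ≃ {j // j ∈ U} where
  toFun i := ⟨(i : Fin (M + 1)).pred (fun h => h0 (h ▸ i.2)),
    (hTU _).mp (by rw [Fin.succ_pred]; exact i.2)⟩
  invFun j := ⟨(j : Fin M).succ, (hTU _).mpr j.2⟩
  left_inv := by
    rintro ⟨i, hi⟩
    apply Subtype.ext
    simp
  right_inv := by
    rintro ⟨j, hj⟩
    apply Subtype.ext
    simp [Fin.pred_succ]

def consEquivMem {M : ℕ} (T : Finset (Fin (M + 1))) (U : Finset (Fin M))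
    (hTU : ∀ j : Fin M, j.succ ∈ T ↔ j ∈ U) (h0 : (0 : Fin (M + 1)) ∈ T) :
    Fin n × ({j // j ∈ U} → Fin n) ≃ ({i // i ∈ T} → Fin n) where
  toFun xg i := Fin.cases (motive := fun t => t ∈ T → Fin n) (fun _ => xg.1)
      (fun j hj => xg.2 ⟨j, (hTU j).mp hj⟩) (i : Fin (M + 1)) i.2
  invFun g := (g ⟨0, h0⟩, fun j => g ⟨(j : Fin M).succ, (hTU _).mpr j.2⟩)
  left_inv := by
    rintro ⟨x, g'⟩
    refine Prod.ext ?_ ?_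
    · simp
    · funext j
      simp
  right_inv := by
    intro g
    funext i
    obtain ⟨i, hi⟩ := i
    induction i using Fin.cases with
    | zero => simp
    | succ j => simp

lemma combine_cons_mem {M : ℕ} (S : Finset (Fin (M + 1))) (h0 : (0 : Fin (M + 1)) ∈ S)
    (h0c : (0 : Fin (M + 1)) ∉ Sᶜ) (x : Fin n) (g' : {j // j ∈ derivS S} → Fin n)
    (h' : {j // j ∈ (derivS S)ᶜ} → Fin n) :
    combineIdx S (consEquivMem S (derivS S) (fun j => (mem_derivS).symm) h0 (x, g'))
        (fun i => h' (succEquivMem Sᶜ (derivS S)ᶜ (fun j => derivS_compl S) h0c i))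
      = Fin.cons x (combineIdx (derivS S) g' h') := by
  funext i
  induction i using Fin.cases with
  | zero =>
      simp [combineIdx, consEquivMem, h0]
  | succ j =>
      by_cases hj : j.succ ∈ S
      · have hj' : j ∈ derivS S := mem_derivS.mpr hj
        simp [combineIdx, consEquivMem, hj, hj']
      · have hj' : j ∉ derivS S := fun h => hj (mem_derivS.mp h)
        simp [combineIdx, consEquivMem, succEquivMem, hj, hj']

lemma combine_cons_notmem {M : ℕ} (S : Finset (Fin (M + 1))) (h0 : (0 : Fin (M + 1)) ∉ S)
    (h0c : (0 : Fin (M + 1)) ∈ Sᶜ) (x : Fin n) (g' : {j // j ∈ derivS S} → Fin n)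
    (h' : {j // j ∈ (derivS S)ᶜ} → Fin n) :
    combineIdx S (fun i => g' (succEquivMem S (derivS S) (fun j => (mem_derivS).symm) h0 i))
        (consEquivMem Sᶜ (derivS S)ᶜ (fun j => derivS_compl S) h0c (x, h'))
      = Fin.cons x (combineIdx (derivS S) g' h') := by
  funext i
  induction i using Fin.cases with
  | zero =>
      simp [combineIdx, consEquivMem, h0]
  | succ j =>
      by_cases hj : j.succ ∈ S
      · have hj' : j ∈ derivS S := mem_derivS.mpr hj
        simp [combineIdx, succEquivMem, hj, hj']
      · have hj' : j ∉ derivS S := fun h => hj (mem_derivS.mp h)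
        simp [combineIdx, consEquivMem, hj, hj']

noncomputable def NS {M : ℕ} (S : Finset (Fin M)) (s c : ℝ) (a : (Fin M → Fin n) → ℝ≥0) : ℝ≥0 :=
  (∑ g : {x // x ∈ S} → Fin n,
    (∑ h : {x // x ∈ Sᶜ} → Fin n, a (combineIdx S g h) ^ c) ^ (s / c)) ^ (1 / s)

lemma NS_succ_mem {M : ℕ} (S : Finset (Fin (M + 1))) (h0 : (0 : Fin (M + 1)) ∈ S) {s c : ℝ}
    (hs : s ≠ 0) (a : (Fin (M + 1) → Fin n) → ℝ≥0) :
    NS S s c a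
      = (∑ x : Fin n, NS (derivS S) s c (fun i' => a (Fin.cons x i')) ^ s) ^ (1 / s) := by
  have h0c : (0 : Fin (M + 1)) ∉ Sᶜ := by simp [h0]
  set E := consEquivMem (n := n) S (derivS S) (fun j => mem_derivS.symm) h0 with hE
  set e := succEquivMem Sᶜ (derivS S)ᶜ (fun j => derivS_compl S) h0c with he
  have inner : ∀ (x : Fin n) (g' : {j // j ∈ derivS S} → Fin n),
      (∑ h : {i // i ∈ Sᶜ} → Fin n, a (combineIdx S (E (x, g')) h) ^ c)
        = ∑ h' : {j // j ∈ (derivS S)ᶜ} → Fin n,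
            a (Fin.cons x (combineIdx (derivS S) g' h')) ^ c := by
    intro x g'
    refine (Fintype.sum_equiv (Equiv.arrowCongr e.symm (Equiv.refl (Fin n)))
      (fun h' => a (Fin.cons x (combineIdx (derivS S) g' h')) ^ c)
      (fun h => a (combineIdx S (E (x, g')) h) ^ c) ?_).symm
    intro h'
    have harr : ((e.symm.arrowCongr (Equiv.refl (Fin n))) h') = fun i => h' (e i) := by
      funext i; simp
    show a (Fin.cons x (combineIdx (derivS S) g' h')) ^ c
        = a (combineIdx S (E (x, g')) ((e.symm.arrowCongr (Equiv.refl (Fin n))) h')) ^ c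
    rw [harr, hE, he, combine_cons_mem S h0 h0c x g' h']
  rw [NS]
  rw [← Fintype.sum_equiv E
      (fun p => (∑ h : {i // i ∈ Sᶜ} → Fin n, a (combineIdx S (E p) h) ^ c) ^ (s / c))
      (fun g => (∑ h : {i // i ∈ Sᶜ} → Fin n, a (combineIdx S g h) ^ c) ^ (s / c))
      (fun p => rfl)]
  rw [Fintype.sum_prod_type]
  congr 1
  refine Finset.sum_congr rfl fun x _ => ?_
  rw [NS, ← NNReal.rpow_mul, one_div, inv_mul_cancel₀ hs, NNReal.rpow_one]
  exact Finset.sum_congr rfl fun g' _ => by rw [inner x g']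

set_option maxHeartbeats 1000000 in
lemma NS_succ_notmem {M : ℕ} (S : Finset (Fin (M + 1))) (h0 : (0 : Fin (M + 1)) ∉ S) {s c : ℝ}
    (hs : 0 < s) (hsc : s ≤ c) (a : (Fin (M + 1) → Fin n) → ℝ≥0) :
    (∑ x : Fin n, NS (derivS S) s c (fun i' => a (Fin.cons x i')) ^ c) ^ (1 / c)
      ≤ NS S s c a := by
  have h0c : (0 : Fin (M + 1)) ∈ Sᶜ := Finset.mem_compl.mpr h0
  have hc : (0 : ℝ) < c := lt_of_lt_of_le hs hsc
  set e := succEquivMem S (derivS S) (fun j => mem_derivS.symm) h0 with he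
  set E := consEquivMem (n := n) Sᶜ (derivS S)ᶜ (fun j => derivS_compl S) h0c with hE
  set F : Fin n → ({j // j ∈ derivS S} → Fin n) → ℝ≥0 :=
    fun x g' => ∑ h' : {j // j ∈ (derivS S)ᶜ} → Fin n,
      a (Fin.cons x (combineIdx (derivS S) g' h')) ^ c with hF
  -- right side equals a two-block expression in F
  have hR : NS S s c a = (∑ g' : {j // j ∈ derivS S} → Fin n,
      (∑ x : Fin n, F x g') ^ (s / c)) ^ (1 / s) := by
    rw [NS]
    congr 1
    refine (Fintype.sum_equiv (Equiv.arrowCongr e.symm (Equiv.refl (Fin n)))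
      (fun g' => (∑ x : Fin n, F x g') ^ (s / c))
      (fun g => (∑ h : {i // i ∈ Sᶜ} → Fin n, a (combineIdx S g h) ^ c) ^ (s / c)) ?_).symm
    intro g'
    have harr : ((e.symm.arrowCongr (Equiv.refl (Fin n))) g') = fun i => g' (e i) := by
      funext i; simp
    rw [harr]
    refine congrArg (· ^ (s / c)) ?_
    rw [← Fintype.sum_equiv E
        (fun p => a (combineIdx S (fun i => g' (e i)) (E p)) ^ c)
        (fun h => a (combineIdx S (fun i => g' (e i)) h) ^ c)
        (fun p => rfl)]
    rw [Fintype.sum_prod_type]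
    refine Finset.sum_congr rfl fun x _ => ?_
    refine Finset.sum_congr rfl fun h' _ => ?_
    rw [hE, he, combine_cons_notmem S h0 h0c x g' h']
  -- left side
  have hL : (∑ x : Fin n, NS (derivS S) s c (fun i' => a (Fin.cons x i')) ^ c) ^ (1 / c)
      = (∑ x : Fin n, (∑ g' : {j // j ∈ derivS S} → Fin n, F x g' ^ (s / c)) ^ (c / s))
          ^ (1 / c) := by
    congr 1
    refine Finset.sum_congr rfl fun x _ => ?_
    rw [NS, ← NNReal.rpow_mul]
    congr 1
    field_simp
  rw [hL, hR]
  -- Minkowski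
  have hr1 : (1 : ℝ) ≤ c / s := (one_le_div hs).mpr hsc
  have mink := minkowski_sum (ι := Fin n) Finset.univ
    (fun x g' => F x g' ^ (s / c)) hr1
  have hGr : ∀ (g' : {j // j ∈ derivS S} → Fin n) (x : Fin n),
      (F x g' ^ (s / c)) ^ (c / s) = F x g' := by
    intro g' x
    rw [← NNReal.rpow_mul]
    rw [show (s / c) * (c / s) = 1 by field_simp]
    exact NNReal.rpow_one _
  calc (∑ x : Fin n, (∑ g' : {j // j ∈ derivS S} → Fin n, F x g' ^ (s / c)) ^ (c / s)) ^ (1 / c)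
      = ((∑ x : Fin n, (∑ g' : {j // j ∈ derivS S} → Fin n, F x g' ^ (s / c)) ^ (c / s))
          ^ (1 / (c / s))) ^ (1 / s) := by
        rw [← NNReal.rpow_mul]
        congr 1
        field_simp
    _ ≤ (∑ g' : {j // j ∈ derivS S} → Fin n,
          (∑ x : Fin n, (F x g' ^ (s / c)) ^ (c / s)) ^ (1 / (c / s))) ^ (1 / s) := by
        exact NNReal.rpow_le_rpow mink (by positivity)
    _ = (∑ g' : {j // j ∈ derivS S} → Fin n, (∑ x : Fin n, F x g') ^ (s / c)) ^ (1 / s) := by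
        congr 1
        refine Finset.sum_congr rfl fun g' _ => ?_
        rw [Finset.sum_congr rfl fun x _ => hGr g' x]
        congr 1
        field_simp

lemma mnorm_le_NS : ∀ (M : ℕ) (S : Finset (Fin M)) {s c : ℝ}, 0 < s → s ≤ c →
    ∀ a : (Fin M → Fin n) → ℝ≥0,
      mnorm M (fun j => if j ∈ S then s else c) a ≤ NS S s c a
  | 0, S, s, c, hs, hsc, a => by
      have hc : (0 : ℝ) < c := lt_of_lt_of_le hs hsc
      rw [mnorm, NS]
      rw [Fintype.sum_unique]
      rw [Fintype.sum_unique]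
      have hd : combineIdx S (default : {x // x ∈ S} → Fin n)
          (default : {x // x ∈ Sᶜ} → Fin n) = (fun i : Fin 0 => i.elim0) :=
        Subsingleton.elim _ _
      rw [hd, ← NNReal.rpow_mul, ← NNReal.rpow_mul]
      rw [show c * (s / c * (1 / s)) = 1 by field_simp]
      rw [NNReal.rpow_one]
  | M + 1, S, s, c, hs, hsc, a => by
      have hc : (0 : ℝ) < c := lt_of_lt_of_le hs hsc
      have htail : (fun j : Fin M => if j.succ ∈ S then s else c)
          = (fun j : Fin M => if j ∈ derivS S then s else c) := by
        funext j; simp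
      by_cases h0 : (0 : Fin (M + 1)) ∈ S
      · rw [mnorm, NS_succ_mem S h0 hs.ne' a]
        simp only [if_pos h0, htail]
        refine NNReal.rpow_le_rpow (Finset.sum_le_sum fun x _ => ?_) (by positivity)
        exact NNReal.rpow_le_rpow
          (mnorm_le_NS M (derivS S) hs hsc (fun i' => a (Fin.cons x i'))) hs.le
      · rw [mnorm]
        simp only [if_neg h0, htail]
        refine le_trans ?_ (NS_succ_notmem S h0 hs hsc a)
        refine NNReal.rpow_le_rpow (Finset.sum_le_sum fun x _ => ?_) (by positivity)
        exact NNReal.rpow_le_rpow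
          (mnorm_le_NS M (derivS S) hs hsc (fun i' => a (Fin.cons x i'))) hc.le

lemma card_powersetCard_filter_mem {m k : ℕ} (hk1 : 1 ≤ k) (j : Fin m) :
    ((Finset.powersetCard k (Finset.univ : Finset (Fin m))).filter (fun S => j ∈ S)).card
      = Nat.choose (m - 1) (k - 1) := by
  have h1 : ((Finset.univ : Finset (Fin m)).erase j).card = m - 1 := by
    rw [Finset.card_erase_of_mem (Finset.mem_univ j), Finset.card_univ, Fintype.card_fin]
  rw [← h1, ← Finset.card_powersetCard]
  refine Finset.card_bij' (fun S _ => S.erase j) (fun S _ => insert j S) ?_ ?_ ?_ ?_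
  · intro S hS
    rw [Finset.mem_filter, Finset.mem_powersetCard] at hS
    rw [Finset.mem_powersetCard]
    exact ⟨Finset.erase_subset_erase j (Finset.subset_univ S),
      by rw [Finset.card_erase_of_mem hS.2, hS.1.2]⟩
  · intro S hS
    rw [Finset.mem_powersetCard] at hS
    have hjS : j ∉ S := fun h => (Finset.notMem_erase j Finset.univ) (hS.1 h)
    rw [Finset.mem_filter, Finset.mem_powersetCard]
    refine ⟨⟨Finset.subset_univ _, ?_⟩, Finset.mem_insert_self j S⟩
    rw [Finset.card_insert_of_notMem hjS, hS.2]
    omega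
  · intro S hS
    rw [Finset.mem_filter] at hS
    exact Finset.insert_erase hS.2
  · intro S hS
    rw [Finset.mem_powersetCard] at hS
    have hjS : j ∉ S := fun h => (Finset.notMem_erase j Finset.univ) (hS.1 h)
    exact Finset.erase_insert hjS


lemma blei_nn {m k : ℕ} (hm : 1 ≤ m) (hk1 : 1 ≤ k) (hkm : k ≤ m)
    (A : (Fin m → Fin n) → ℝ≥0) :
    (∑ i : Fin m → Fin n, A i ^ ((2 * m : ℝ) / (m + 1))) ^ ((m + 1 : ℝ) / (2 * m))
      ≤ ∏ S ∈ Finset.powersetCard k (Finset.univ : Finset (Fin m)),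
          (NS S ((2 * k : ℝ) / (k + 1)) 2 A) ^ (((Nat.choose m k : ℝ≥0)⁻¹ : ℝ≥0) : ℝ) := by
  have hm0 : (0 : ℝ) < m := by exact_mod_cast hm
  have hk0 : (0 : ℝ) < k := by exact_mod_cast hk1
  set r : ℝ := (2 * m : ℝ) / (m + 1) with hrdef
  set s : ℝ := (2 * k : ℝ) / (k + 1) with hsdef
  have hr : 0 < r := by rw [hrdef]; positivity
  have hs : 0 < s := by rw [hsdef]; positivity
  have hsc : s ≤ 2 := by
    rw [hsdef, div_le_iff₀ (by positivity)]
    nlinarith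
  have hC : 0 < Nat.choose m k := Nat.choose_pos hkm
  set T := Finset.powersetCard k (Finset.univ : Finset (Fin m)) with hT
  have cardT : T.card = Nat.choose m k := by
    rw [hT, Finset.card_powersetCard, Finset.card_univ, Fintype.card_fin]
  set θ : Finset (Fin m) → ℝ≥0 := fun _ => (Nat.choose m k : ℝ≥0)⁻¹ with hθdef
  have hCnn : (Nat.choose m k : ℝ≥0) ≠ 0 := by exact_mod_cast hC.ne'
  have hθ1 : ∑ S ∈ T, θ S = 1 := by
    rw [Finset.sum_const, cardT, nsmul_eq_mul]
    exact mul_inv_cancel₀ (by exact_mod_cast hC.ne')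
  have hθpos : ∀ S ∈ T, 0 < θ S := fun S _ => by
    rw [hθdef]; positivity
  -- exponent identity
  have hpq : ∀ j : Fin m, 1 / r = ∑ S ∈ T, (θ S : ℝ) / (if j ∈ S then s else 2) := by
    intro j
    have hsplit : ∑ S ∈ T, (θ S : ℝ) / (if j ∈ S then s else 2)
        = ∑ S ∈ T, (if j ∈ S then (θ S : ℝ) / s else (θ S : ℝ) / 2) := by
      refine Finset.sum_congr rfl fun S _ => ?_
      by_cases hj : j ∈ S <;> simp [hj]
    rw [hsplit]
    simp only [hθdef]
    rw [Finset.sum_ite, Finset.sum_const, Finset.sum_const, nsmul_eq_mul, nsmul_eq_mul]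
    have hN1 : (T.filter (fun S => j ∈ S)).card = Nat.choose (m - 1) (k - 1) :=
      card_powersetCard_filter_mem hk1 j
    have hN2 : (T.filter (fun S => ¬ j ∈ S)).card
        = Nat.choose m k - Nat.choose (m - 1) (k - 1) := by
      have := Finset.card_filter_add_card_filter_not (s := T) (p := fun S => j ∈ S)
      omega
    have hle : Nat.choose (m - 1) (k - 1) ≤ Nat.choose m k := by
      have := Finset.card_filter_le T (fun S => j ∈ S)
      omega
    have hmul : (m : ℝ) * (Nat.choose (m - 1) (k - 1) : ℝ)
        = (Nat.choose m k : ℝ) * k := by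
      have h := Nat.add_one_mul_choose_eq (m - 1) (k - 1)
      have hm' : m - 1 + 1 = m := by omega
      have hk' : k - 1 + 1 = k := by omega
      rw [hm', hk'] at h
      exact_mod_cast h
    rw [hN1, hN2]
    have hcast : ((Nat.choose m k - Nat.choose (m - 1) (k - 1) : ℕ) : ℝ)
        = (Nat.choose m k : ℝ) - (Nat.choose (m - 1) (k - 1) : ℝ) := by
      exact Nat.cast_sub hle
    rw [hcast]
    push_cast
    rw [hrdef, hsdef]
    have hCr : (0:ℝ) < (Nat.choose m k : ℝ) := by exact_mod_cast hC
    field_simp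
    ring_nf
    nlinarith [hmul, hCr, hm0, hk0]
  -- interpolation
  have interp := mholder T θ hθ1 hθpos m (fun S j => if j ∈ S then s else 2) (fun _ => r)
    (fun S _ j => by by_cases hj : j ∈ S <;> simp [hj, hs] <;> norm_num)
    (fun _ => hr) hpq A
  have hmc := mnorm_const (n := n) (M := m) hr A
  have h1r : (m + 1 : ℝ) / (2 * m) = 1 / r := by
    rw [hrdef, one_div_div]
  rw [h1r, ← hmc]
  refine le_trans interp ?_
  refine Finset.prod_le_prod' fun S _ => ?_
  exact NNReal.rpow_le_rpow (mnorm_le_NS m S hs hsc A) (by positivity)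

/-- Generalized Blei inequality (Theorem 2.2). -/
theorem blei_generalized {m n k : ℕ} (hm : 1 ≤ m) (hk1 : 1 ≤ k) (hkm : k ≤ m)
    (a : (Fin m → Fin n) → ℂ) :
    (∑ i : Fin m → Fin n, ‖a i‖ ^ ((2 * m : ℝ) / (m + 1))) ^
        ((m + 1 : ℝ) / (2 * m)) ≤
      ∏ S ∈ Finset.powersetCard k (Finset.univ : Finset (Fin m)),
        ((∑ g : {x // x ∈ S} → Fin n,
            (∑ h : {x // x ∈ Sᶜ} → Fin n,
              ‖a (combineIdx S g h)‖ ^ 2) ^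
                ((1 / 2 : ℝ) * ((2 * k : ℝ) / (k + 1)))) ^
          (((k + 1 : ℝ) / (2 * k)) * (1 / (Nat.choose m k : ℝ)))) := by
  set A : (Fin m → Fin n) → ℝ≥0 := fun i => ‖a i‖₊ with hA
  have key := blei_nn (n := n) hm hk1 hkm A
  have lhs_eq : (∑ i : Fin m → Fin n, ‖a i‖ ^ ((2 * m : ℝ) / (m + 1))) ^
        ((m + 1 : ℝ) / (2 * m))
      = (((∑ i : Fin m → Fin n, A i ^ ((2 * m : ℝ) / (m + 1))) ^
          ((m + 1 : ℝ) / (2 * m)) : ℝ≥0) : ℝ) := by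
    rw [NNReal.coe_rpow, NNReal.coe_sum]
    refine congrArg (· ^ ((m + 1 : ℝ) / (2 * m))) ?_
    refine Finset.sum_congr rfl fun i _ => ?_
    rw [NNReal.coe_rpow]
    simp only [hA]
    rw [coe_nnnorm]
  have rhs_eq : ∀ S : Finset (Fin m),
      ((∑ g : {x // x ∈ S} → Fin n,
          (∑ h : {x // x ∈ Sᶜ} → Fin n, ‖a (combineIdx S g h)‖ ^ 2) ^
            ((1 / 2 : ℝ) * ((2 * k : ℝ) / (k + 1)))) ^
        (((k + 1 : ℝ) / (2 * k)) * (1 / (Nat.choose m k : ℝ))))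
      = ((NS S ((2 * k : ℝ) / (k + 1)) 2 A ^
          (((Nat.choose m k : ℝ≥0)⁻¹ : ℝ≥0) : ℝ) : ℝ≥0) : ℝ) := by
    intro S
    have inner_eq : ∀ g : {x // x ∈ S} → Fin n,
        (∑ h : {x // x ∈ Sᶜ} → Fin n, ‖a (combineIdx S g h)‖ ^ 2) ^
            ((1 / 2 : ℝ) * ((2 * k : ℝ) / (k + 1)))
        = (((∑ h : {x // x ∈ Sᶜ} → Fin n, A (combineIdx S g h) ^ (2 : ℝ)) ^
            (((2 * k : ℝ) / (k + 1)) / 2) : ℝ≥0) : ℝ) := by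
      intro g
      rw [NNReal.coe_rpow, NNReal.coe_sum]
      rw [show ((1 / 2 : ℝ) * ((2 * k : ℝ) / (k + 1))) = ((2 * k : ℝ) / (k + 1)) / 2 by ring]
      congr 1
      refine Finset.sum_congr rfl fun h _ => ?_
      simp only [hA]
      rw [NNReal.coe_rpow, coe_nnnorm]
      rw [show (2 : ℝ) = ((2 : ℕ) : ℝ) by norm_num, Real.rpow_natCast]
    rw [Finset.sum_congr rfl fun g _ => inner_eq g]
    rw [← NNReal.coe_sum, NS, NNReal.coe_rpow, NNReal.coe_rpow]
    rw [← Real.rpow_mul (NNReal.coe_nonneg _)]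
    congr 1
    rw [one_div_div, NNReal.coe_inv, NNReal.coe_natCast, one_div]
  rw [lhs_eq, Finset.prod_congr rfl fun S _ => rhs_eq S, ← NNReal.coe_prod]
  exact NNReal.coe_le_coe.mpr key
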